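/- Let 0 < λ ≤ Λ and define the Pucci maximal operator on real symmetric N×N matrices by M⁺(M) = Λ·(sum of positive eigenvalues) + λ·(sum of negative eigenvalues). Let p ∈ ℝ^N and let K be the symmetric matrix with K_ij = −p_N δ_{ij} for i,j < N, K_iN = K_Ni = p_i for i < N, K_NN = p_N. Then M⁺(K) ≤ (Λ(N−1) − λ)|p| ≤ Λ(N−1)|p|. -/

import Mathlib

open Finset

/-- The matrix `K(p)` with `K i j = p j δ_{iN} + p i δ_{jN} - p N δ_{ij}`. -/
def Kmat {n : ℕ} (p : Fin (n + 1) → ℝ) : Matrix (Fin (n + 1)) (Fin (n + 1)) ℝ :=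
  Matrix.of fun i j =>
    (if i = Fin.last n then p j else 0) + (if j = Fin.last n then p i else 0)
      - (if i = j then p (Fin.last n) else 0)

/-- Euclidean norm of a vector in `ℝ^N`. -/
noncomputable def enormEucl {N : ℕ} (p : Fin N → ℝ) : ℝ :=
  Real.sqrt (∑ i, p i ^ 2)

lemma Kmat_mulVec {n : ℕ} (p v : Fin (n + 1) → ℝ) :
    (Kmat p).mulVec v = fun j =>
      (if j = Fin.last n then (∑ k, p k * v k) else 0) + p j * v (Fin.last n)
        - p (Fin.last n) * v j := by
  funext j
  simp only [Matrix.mulVec, dotProduct, Kmat, Matrix.of_apply, add_mul, sub_mul,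
    Finset.sum_sub_distrib, Finset.sum_add_distrib, ite_mul, zero_mul]
  congr 1
  · congr 1
    · split <;> simp
    · simp [Finset.sum_ite_eq' Finset.univ (Fin.last n)]
  · simp [Finset.sum_ite_eq Finset.univ j]

lemma Kmat_trace {n : ℕ} (p : Fin (n + 2) → ℝ) :
    ∑ i, Kmat p i i = -(n : ℝ) * p (Fin.last (n + 1)) := by
  simp only [Kmat, Matrix.of_apply, if_pos rfl]
  rw [Finset.sum_sub_distrib, Finset.sum_add_distrib]
  simp [Finset.sum_ite_eq' Finset.univ (Fin.last (n+1)), Fin.sum_univ_succ]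
  ring

lemma sum_eigenvalues_eq_trace' {m : ℕ} (A : Matrix (Fin m) (Fin m) ℝ)
    (hA : A.IsHermitian) : ∑ i, hA.eigenvalues i = ∑ i, A i i := by
  have h := hA.spectral_theorem
  have : A.trace = (Matrix.diagonal (RCLike.ofReal ∘ hA.eigenvalues) : Matrix (Fin m) (Fin m) ℝ).trace := by
    conv_lhs => rw [h]
    rw [← h]; simp [hA.trace_eq_sum_eigenvalues, Matrix.trace_diagonal]
  simpa [Matrix.trace, Matrix.diag] using this.symm

lemma eig_abs_le {n : ℕ} (p : Fin (n + 2) → ℝ) (hK : (Kmat p).IsHermitian)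
    (i : Fin (n + 2)) : |hK.eigenvalues i| ≤ enormEucl p := by
  set L := Fin.last (n + 1)
  set v : Fin (n + 2) → ℝ := ⇑(hK.eigenvectorBasis i) with hv
  set μ := hK.eigenvalues i with hμ
  set a := p L with ha
  set s := ∑ k, p k * v k with hs
  have hnorm : ‖hK.eigenvectorBasis i‖ = 1 := hK.eigenvectorBasis.orthonormal.1 i
  have hV : ∑ j, v j ^ 2 = 1 := by
    have := hnorm
    rw [EuclideanSpace.norm_eq] at this
    have h2 : Real.sqrt (∑ j, ‖(hK.eigenvectorBasis i) j‖ ^ 2) ^ 2 = 1 := by rw [this]; norm_num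
    rw [Real.sq_sqrt (by positivity)] at h2
    simpa [Real.norm_eq_abs, sq_abs] using h2
  have heig := hK.mulVec_eigenvectorBasis i
  have key : ∀ j, μ * v j =
      (if j = L then s else 0) + p j * v L - a * v j := by
    intro j
    have := congrFun ((Kmat_mulVec p v).symm.trans heig) j
    simp only [Pi.smul_apply, smul_eq_mul] at this
    rw [← this]
  have hexp : μ ^ 2 * (∑ j, v j ^ 2) =
      s ^ 2 + (v L) ^ 2 * (∑ j, p j ^ 2) + a ^ 2 * (∑ j, v j ^ 2) - 2 * a * v L * s := by
    have h1 : μ ^ 2 * (∑ j, v j ^ 2) = ∑ j, (μ * v j) ^ 2 := by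
      rw [Finset.mul_sum]; exact Finset.sum_congr rfl fun j _ => by ring
    rw [h1]
    have h2 : ∀ j, (μ * v j) ^ 2 =
        (if j = L then s ^ 2 + 2 * s * (p j * v L - a * v j) else 0)
          + ((v L) ^ 2 * p j ^ 2 - 2 * a * v L * (p j * v j) + a ^ 2 * v j ^ 2) := by
      intro j
      rw [key j]
      split <;> ring
    rw [Finset.sum_congr rfl fun j _ => h2 j, Finset.sum_add_distrib,
      Finset.sum_ite_eq' Finset.univ L]
    simp only [Finset.mem_univ, if_pos]
    rw [Finset.sum_add_distrib, Finset.sum_sub_distrib, ← Finset.mul_sum, ← Finset.mul_sum,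
      ← Finset.mul_sum, ← hs, ← ha]
    ring
  -- Cauchy-Schwarz on the complement of L
  have hcs : (s - a * v L) ^ 2 ≤ ((∑ j, p j ^ 2) - a ^ 2) * ((∑ j, v j ^ 2) - (v L) ^ 2) := by
    have h1 : ∑ j ∈ Finset.univ.erase L, p j * v j = s - a * v L := by
      have h := Finset.add_sum_erase Finset.univ (fun j => p j * v j) (Finset.mem_univ L)
      rw [← hs] at h; linarith
    have h2 : ∑ j ∈ Finset.univ.erase L, p j ^ 2 = (∑ j, p j ^ 2) - a ^ 2 := by
      have h := Finset.add_sum_erase Finset.univ (fun j => p j ^ 2) (Finset.mem_univ L)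
      linarith
    have h3 : ∑ j ∈ Finset.univ.erase L, v j ^ 2 = (∑ j, v j ^ 2) - (v L) ^ 2 := by
      have h := Finset.add_sum_erase Finset.univ (fun j => v j ^ 2) (Finset.mem_univ L)
      linarith
    have := Finset.sum_mul_sq_le_sq_mul_sq (Finset.univ.erase L) p v
    rwa [h1, h2, h3] at this
  have hsq : μ ^ 2 ≤ ∑ j, p j ^ 2 := by nlinarith [hexp, hcs, hV]
  have : |μ| ≤ Real.sqrt (∑ j, p j ^ 2) := by
    rw [← Real.sqrt_sq_eq_abs]
    exact Real.sqrt_le_sqrt hsq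
  simpa [enormEucl] using this

lemma card_ne_le_two {n : ℕ} (p : Fin (n + 2) → ℝ) (hK : (Kmat p).IsHermitian) :
    (Finset.univ.filter fun i =>
      hK.eigenvalues i ≠ -p (Fin.last (n + 1))).card ≤ 2 := by
  classical
  set L := Fin.last (n + 1)
  set a := p L with ha
  set T := Finset.univ.filter fun i => hK.eigenvalues i ≠ -a with hT
  set pE : EuclideanSpace ℝ (Fin (n + 2)) := (WithLp.equiv 2 _).symm p with hpE
  set eL : EuclideanSpace ℝ (Fin (n + 2)) := EuclideanSpace.single L 1 with heL
  set W : Submodule ℝ (EuclideanSpace ℝ (Fin (n + 2))) :=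
    Submodule.span ℝ {eL, pE} with hW
  have hmem : ∀ i ∈ T, (hK.eigenvectorBasis i : EuclideanSpace ℝ (Fin (n + 2))) ∈ W := by
    intro i hi
    set v : Fin (n + 2) → ℝ := ⇑(hK.eigenvectorBasis i) with hv
    set μ := hK.eigenvalues i with hμ
    have hne : μ + a ≠ 0 := by
      intro h
      have h2 : μ = -a := by linarith
      exact (Finset.mem_filter.mp hi).2 h2
    have heig := hK.mulVec_eigenvectorBasis i
    have key : ∀ j, μ * v j =
        (if j = L then (∑ k, p k * v k) else 0) + p j * v L - a * v j := by
      intro j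
      have := congrFun ((Kmat_mulVec p v).symm.trans heig) j
      simp only [Pi.smul_apply, smul_eq_mul] at this
      rw [← this]
    have hfun : ∀ j, (μ + a) * v j
        = ((∑ k, p k * v k) * if j = L then 1 else 0) + v L * p j := by
      intro j
      have h2 : (μ + a) * v j = (if j = L then (∑ k, p k * v k) else 0) + p j * v L := by
        rw [add_mul, key j]; ring
      rw [h2]; split <;> ring
    have hcomb : (μ + a) • hK.eigenvectorBasis i
        = (∑ k, p k * v k) • eL + (v L) • pE := by
      apply PiLp.ext
      intro j
      simp only [PiLp.smul_apply, PiLp.add_apply, smul_eq_mul, heL,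
        EuclideanSpace.single_apply, hpE, WithLp.equiv_symm_apply, PiLp.toLp_apply]
      exact hfun j
    have : hK.eigenvectorBasis i = (μ + a)⁻¹ • ((∑ k, p k * v k) • eL + (v L) • pE) := by
      rw [← hcomb, smul_smul, inv_mul_cancel₀ hne, one_smul]
    rw [this]
    refine Submodule.smul_mem _ _ (Submodule.add_mem _ ?_ ?_)
    · exact Submodule.smul_mem _ _ (Submodule.subset_span (by simp))
    · exact Submodule.smul_mem _ _ (Submodule.subset_span (by simp))
  have hfr : Module.finrank ℝ W ≤ 2 := by
    have : ({eL, pE} : Set (EuclideanSpace ℝ (Fin (n + 2)))).toFinset.card ≤ 2 := by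
      rw [Set.toFinset_insert, Set.toFinset_singleton]
      exact (Finset.card_insert_le _ _).trans (by simp)
    exact (finrank_span_le_card _).trans this
  have hli : LinearIndependent ℝ (fun i : {x // x ∈ T} =>
      (⟨hK.eigenvectorBasis i, hmem i i.2⟩ : W)) := by
    apply LinearIndependent.of_comp W.subtype
    have := (hK.eigenvectorBasis.orthonormal.linearIndependent).comp
      (Subtype.val : {x // x ∈ T} → Fin (n + 2)) Subtype.val_injective
    exact this
  have h := hli.fintype_card_le_finrank
  rw [Fintype.card_coe] at h
  exact h.trans hfr

/-- Pucci maximal bound: `M⁺(K(p)) ≤ (Λ(N-1) - λ)|p| ≤ Λ(N-1)|p|`, where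
`M⁺(M) = Λ·(sum of positive eigenvalues) + λ·(sum of negative eigenvalues)`
and `N = n + 2`. -/
theorem pucciMax_Kmat_upper_bound (n : ℕ) (lam Lam : ℝ) (h0 : 0 < lam)
    (hlL : lam ≤ Lam) (p : Fin (n + 2) → ℝ) (hK : (Kmat p).IsHermitian) :
    Lam * ∑ i, max (hK.eigenvalues i) 0 + lam * ∑ i, min (hK.eigenvalues i) 0
        ≤ (Lam * (n + 1) - lam) * enormEucl p
      ∧ (Lam * (n + 1) - lam) * enormEucl p ≤ Lam * (n + 1) * enormEucl p := by
  classical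
  set L := Fin.last (n + 1)
  set μ : Fin (n + 2) → ℝ := hK.eigenvalues with hμ
  set a := p L with ha
  set e := enormEucl p with he
  have he0 : 0 ≤ e := Real.sqrt_nonneg _
  have habs : |a| ≤ e := by
    have h1 : a ^ 2 ≤ ∑ i, p i ^ 2 :=
      Finset.single_le_sum (f := fun i => p i ^ 2) (fun i _ => sq_nonneg _) (Finset.mem_univ L)
    calc |a| = Real.sqrt (a ^ 2) := (Real.sqrt_sq_eq_abs a).symm
      _ ≤ e := Real.sqrt_le_sqrt h1
  have hbound : ∀ i, |μ i| ≤ e := fun i => eig_abs_le p hK i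
  have htr : ∑ i, μ i = -(n : ℝ) * a := by
    rw [hμ, sum_eigenvalues_eq_trace' _ hK, Kmat_trace]
  set T := Finset.univ.filter fun i => μ i ≠ -a with hT
  have hcard : T.card ≤ 2 := card_ne_le_two p hK
  have hTc : ∀ i ∈ Finset.univ \ T, μ i = -a := by
    intro i hi
    simp only [hT, Finset.mem_sdiff, Finset.mem_filter, Finset.mem_univ, true_and,
      not_not] at hi
    exact hi
  have hcardc : (Finset.univ \ T).card = n + 2 - T.card := by
    rw [Finset.card_sdiff_of_subset (Finset.subset_univ T), Finset.card_univ, Fintype.card_fin]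
  have hsum_split : ∀ f : Fin (n + 2) → ℝ,
      ∑ i, f i = ∑ i ∈ Finset.univ \ T, f i + ∑ i ∈ T, f i := fun f =>
    (Finset.sum_sdiff (Finset.subset_univ T)).symm
  have hsumc : ∑ i ∈ Finset.univ \ T, μ i = ((n + 2 - T.card : ℕ) : ℝ) * (-a) := by
    rw [Finset.sum_congr rfl hTc, Finset.sum_const, hcardc, nsmul_eq_mul]
  have hsumT : ∑ i ∈ T, μ i = (2 - (T.card : ℝ)) * a := by
    have h1 := hsum_split μ
    rw [htr, hsumc] at h1
    have h2 : ((n + 2 - T.card : ℕ) : ℝ) = (n : ℝ) + 2 - T.card := by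
      have : T.card ≤ n + 2 := hcard.trans (by omega)
      push_cast [Nat.cast_sub this]
      ring
    rw [h2] at h1
    linarith
  -- the function f
  set fm : ℝ → ℝ := fun x => Lam * max x 0 + lam * min x 0 with hfm
  have hLam0 : (0 : ℝ) ≤ Lam := le_of_lt (lt_of_lt_of_le h0 hlL)
  have hfneg : ∀ x, |x| ≤ e → fm x ≤ Lam * e := by
    intro x hx
    have h1 : max x 0 ≤ |x| := max_le (le_abs_self x) (abs_nonneg x)
    have h2 : min x 0 ≤ 0 := min_le_right _ _
    have h3 := mul_le_mul_of_nonneg_left (h1.trans hx) hLam0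
    have h4 := mul_nonpos_of_nonneg_of_nonpos (le_of_lt h0) h2
    show Lam * max x 0 + lam * min x 0 ≤ Lam * e
    linarith
  have hfpair : ∀ x, fm x + fm (-x) = (Lam - lam) * |x| := by
    intro x
    rcases le_total 0 x with h | h
    · rw [hfm]
      simp only [max_eq_left h, min_eq_right h, max_eq_right (neg_nonpos.mpr h),
        min_eq_left (neg_nonpos.mpr h), abs_of_nonneg h]
      ring
    · rw [hfm]
      simp only [max_eq_right h, min_eq_left h, max_eq_left (neg_nonneg.mpr h),
        min_eq_right (neg_nonneg.mpr h), abs_of_nonpos h]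
      ring
  have hfa : fm (-a) ≤ Lam * e := hfneg (-a) (by rwa [abs_neg])
  have hLHS : Lam * ∑ i, max (μ i) 0 + lam * ∑ i, min (μ i) 0 = ∑ i, fm (μ i) := by
    rw [Finset.mul_sum, Finset.mul_sum, ← Finset.sum_add_distrib]
  constructor
  · rw [hLHS, hsum_split (fun i => fm (μ i))]
    have hsumcf : ∑ i ∈ Finset.univ \ T, fm (μ i) = ((n + 2 - T.card : ℕ) : ℝ) * fm (-a) := by
      rw [Finset.sum_congr rfl (fun i hi => by rw [hTc i hi]), Finset.sum_const, hcardc,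
        nsmul_eq_mul]
    rw [hsumcf]
    interval_cases hc : T.card
    · -- card 0 : T empty, a = 0, all eigenvalues 0
      have hTe : T = ∅ := Finset.card_eq_zero.mp hc
      have ha0 : a = 0 := by
        have := hsumT
        rw [hTe, Finset.sum_empty] at this
        push_cast at this
        linarith
      rw [hTe, Finset.sum_empty, ha0]
      have : fm (-0 : ℝ) = 0 := by simp [hfm]
      rw [this]
      have hre : 0 ≤ (Lam * (n + 1) - lam) * e := by
        apply mul_nonneg _ he0
        have : Lam ≤ Lam * ((n : ℝ) + 1) := by nlinarith
        linarith
      simpa using hre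
    · -- card 1 : T = {i}, μ i = a
      obtain ⟨i, hi⟩ := Finset.card_eq_one.mp hc
      have hμi : μ i = a := by
        have := hsumT
        rw [hi, Finset.sum_singleton] at this
        push_cast at this
        linarith
      rw [hi, Finset.sum_singleton, hμi]
      have hpa := hfpair a
      have h1 : fm a + fm (-a) = (Lam - lam) * |a| := hpa
      have h2 : (Lam - lam) * |a| ≤ (Lam - lam) * e :=
        mul_le_mul_of_nonneg_left habs (by linarith)
      have hn : ((n + 2 - 1 : ℕ) : ℝ) = (n : ℝ) + 1 := by push_cast; ring
      rw [hn]
      have h3 := mul_le_mul_of_nonneg_left hfa (Nat.cast_nonneg n : (0:ℝ) ≤ n)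
      linarith
    · -- card 2 : T = {i, j}, μ j = -μ i
      obtain ⟨i, j, hij, hTij⟩ := Finset.card_eq_two.mp hc
      have hsum2 : μ i + μ j = 0 := by
        have := hsumT
        rw [hTij, Finset.sum_insert (by simp [hij]), Finset.sum_singleton] at this
        push_cast at this
        linarith
      have hμj : μ j = -(μ i) := by linarith
      rw [hTij, Finset.sum_insert (by simp [hij]), Finset.sum_singleton, hμj]
      have h1 : fm (μ i) + fm (-(μ i)) = (Lam - lam) * |μ i| := hfpair (μ i)
      have h2 : (Lam - lam) * |μ i| ≤ (Lam - lam) * e :=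
        mul_le_mul_of_nonneg_left (hbound i) (by linarith)
      have hn : ((n + 2 - 2 : ℕ) : ℝ) = (n : ℝ) := by push_cast; ring
      rw [hn]
      have h3 := mul_le_mul_of_nonneg_left hfa (Nat.cast_nonneg n : (0:ℝ) ≤ n)
      linarith
  · have h := mul_nonneg h0.le he0
    nlinarith [h]
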